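/- If a QMA verifier accepts input x with some p(n)-qubit proof state ρ with probability at least a, then when the proof is replaced by the totally mixed state on p(n) qubits, the verifier accepts x with probability at least a·2^{-p(n)}. Consequently, acceptance probabilities a ≥ 1 - 2^{-(p+2)} on yes-instances and b ≤ 2^{-(p+2)} on no-instances yield, with totally mixed proof, acceptance probability at least 2^{-(p+1)} on yes-instances and at most 2^{-(p+2)} on no-instances. -/

import Mathlib

open Matrix
open scoped ComplexOrder

section Aux

variable {n : Type*} [Fintype n] [DecidableEq n]

/-- The trace of a Hermitian matrix is the sum of its eigenvalues. -/
lemma aux_trace_eq_sum_eigenvalues {A : Matrix n n ℂ} (hA : A.IsHermitian) :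
    A.trace = ∑ i, (hA.eigenvalues i : ℂ) := by
  conv_lhs => rw [hA.spectral_theorem, Unitary.conjStarAlgAut_apply]
  rw [Matrix.trace_mul_cycle]
  have h1 : (star (hA.eigenvectorUnitary : Matrix n n ℂ)) *
      (hA.eigenvectorUnitary : Matrix n n ℂ) = 1 := by
    exact Unitary.coe_star_mul_self _
  rw [h1, Matrix.one_mul, Matrix.trace_diagonal]
  rfl

/-- If `ρ` is PSD with trace 1, then `1 - ρ` is PSD. -/
lemma aux_one_sub_posSemidef {ρ : Matrix n n ℂ} (hρ : ρ.PosSemidef)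
    (htr : ρ.trace = 1) : ((1 : Matrix n n ℂ) - ρ).PosSemidef := by
  have hH := hρ.isHermitian
  have hsum : ∑ i, hH.eigenvalues i = 1 := by
    have := aux_trace_eq_sum_eigenvalues hH
    rw [htr] at this
    have : ((∑ i, hH.eigenvalues i : ℝ) : ℂ) = 1 := by
      push_cast
      exact this.symm
    exact_mod_cast this
  have hle : ∀ i, hH.eigenvalues i ≤ 1 := by
    intro i
    rw [← hsum]
    exact Finset.single_le_sum (fun j _ => hρ.eigenvalues_nonneg j) (Finset.mem_univ i)
  have hUU : (hH.eigenvectorUnitary : Matrix n n ℂ) *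
      (star (hH.eigenvectorUnitary : Matrix n n ℂ)) = 1 := Unitary.coe_mul_star_self _
  have hdecomp : (1 : Matrix n n ℂ) - ρ =
      (hH.eigenvectorUnitary : Matrix n n ℂ) *
        (diagonal (fun i => 1 - (hH.eigenvalues i : ℂ))) *
        (star (hH.eigenvectorUnitary : Matrix n n ℂ)) := by
    have hd : (diagonal (fun i => 1 - (hH.eigenvalues i : ℂ))) =
        1 - diagonal (Complex.ofReal ∘ hH.eigenvalues) := by
      rw [← Matrix.diagonal_one, Matrix.diagonal_sub]
      rfl
    rw [hd, Matrix.mul_sub, Matrix.mul_one, Matrix.sub_mul, hUU]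
    congr 1
    exact hH.spectral_theorem.trans (Unitary.conjStarAlgAut_apply ..)
  rw [hdecomp]
  have hdiag : (diagonal (fun i => 1 - (hH.eigenvalues i : ℂ))).PosSemidef := by
    rw [Matrix.posSemidef_diagonal_iff]
    intro i
    rw [sub_nonneg]
    exact_mod_cast hle i
  have := hdiag.mul_mul_conjTranspose_same (hH.eigenvectorUnitary : Matrix n n ℂ)
  simpa [Matrix.star_eq_conjTranspose] using this

/-- The real part of the trace of a PSD matrix is nonnegative. -/
lemma aux_trace_re_nonneg {M : Matrix n n ℂ} (hM : M.PosSemidef) :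
    0 ≤ M.trace.re := by
  rw [Matrix.trace]
  simp only [Complex.re_sum]
  apply Finset.sum_nonneg
  intro i _
  have h := hM.re_dotProduct_nonneg (Pi.single i 1)
  simpa [dotProduct, Matrix.mulVec, Pi.single_apply, Finset.sum_ite_eq] using h

open scoped MatrixOrder in
/-- The trace of a product of two PSD matrices has nonnegative real part. -/
lemma aux_trace_mul_re_nonneg {A B : Matrix n n ℂ} (hA : A.PosSemidef)
    (hB : B.PosSemidef) : 0 ≤ (A * B).trace.re := by
  have hs : CFC.sqrt A * CFC.sqrt A = A := CFC.sqrt_mul_sqrt_self A hA.nonneg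
  have hHerm : (CFC.sqrt A).conjTranspose = CFC.sqrt A := (CFC.sqrt_nonneg A).posSemidef.isHermitian
  have h1 : (A * B).trace = (CFC.sqrt A * B * CFC.sqrt A).trace := by
    conv_lhs => rw [← hs]
    rw [Matrix.mul_assoc, Matrix.trace_mul_comm]
  rw [h1]
  apply aux_trace_re_nonneg
  have := hB.mul_mul_conjTranspose_same (CFC.sqrt A)
  rwa [hHerm] at this

end Aux

/-- Replacing a QMA proof by the totally mixed state on `p` qubits. -/
theorem totally_mixed_proof (p : ℕ)
    (Q : Matrix (Fin (2 ^ p)) (Fin (2 ^ p)) ℂ)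
    (hQ : Q.PosSemidef) (hQI : ((1 : Matrix (Fin (2 ^ p)) (Fin (2 ^ p)) ℂ) - Q).PosSemidef) :
    (∀ (ρ : Matrix (Fin (2 ^ p)) (Fin (2 ^ p)) ℂ), ρ.PosSemidef → ρ.trace = 1 →
      ∀ a : ℝ, a ≤ (Q * ρ).trace.re →
        a * ((2 : ℝ) ^ p)⁻¹ ≤
          (Q * (((2 : ℝ) ^ p : ℂ)⁻¹ • (1 : Matrix (Fin (2 ^ p)) (Fin (2 ^ p)) ℂ))).trace.re) ∧
    ((∃ ρ : Matrix (Fin (2 ^ p)) (Fin (2 ^ p)) ℂ, ρ.PosSemidef ∧ ρ.trace = 1 ∧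
        1 - ((2 : ℝ) ^ (p + 2))⁻¹ ≤ (Q * ρ).trace.re) →
      ((2 : ℝ) ^ (p + 1))⁻¹ ≤
        (Q * (((2 : ℝ) ^ p : ℂ)⁻¹ • (1 : Matrix (Fin (2 ^ p)) (Fin (2 ^ p)) ℂ))).trace.re) ∧
    ((∀ ρ : Matrix (Fin (2 ^ p)) (Fin (2 ^ p)) ℂ, ρ.PosSemidef → ρ.trace = 1 →
        (Q * ρ).trace.re ≤ ((2 : ℝ) ^ (p + 2))⁻¹) →
      (Q * (((2 : ℝ) ^ p : ℂ)⁻¹ • (1 : Matrix (Fin (2 ^ p)) (Fin (2 ^ p)) ℂ))).trace.re ≤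
        ((2 : ℝ) ^ (p + 2))⁻¹) := by
  have hpow : (0 : ℝ) < (2 : ℝ) ^ p := by positivity
  -- the mixed-state acceptance probability
  have hmix : (Q * (((2 : ℝ) ^ p : ℂ)⁻¹ •
      (1 : Matrix (Fin (2 ^ p)) (Fin (2 ^ p)) ℂ))).trace.re
      = ((2 : ℝ) ^ p)⁻¹ * Q.trace.re := by
    rw [Matrix.mul_smul, Matrix.mul_one, Matrix.trace_smul, smul_eq_mul]
    rw [show (((2 : ℝ) ^ p : ℂ))⁻¹ = (((((2 : ℝ) ^ p)⁻¹ : ℝ)) : ℂ) by push_cast; ring]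
    rw [Complex.re_ofReal_mul]
  -- the totally mixed state
  set c : ℂ := (((2 : ℝ) ^ p : ℂ))⁻¹ with hc
  have hmixPSD : (c • (1 : Matrix (Fin (2 ^ p)) (Fin (2 ^ p)) ℂ)).PosSemidef := by
    have h1 : c • (1 : Matrix (Fin (2 ^ p)) (Fin (2 ^ p)) ℂ) =
        diagonal (fun _ => c) := by
      ext i j
      by_cases h : i = j <;> simp [Matrix.diagonal_apply, Matrix.one_apply, h]
    rw [h1, Matrix.posSemidef_diagonal_iff]
    intro i
    rw [hc, show (((2 : ℝ) ^ p : ℂ))⁻¹ = (((((2 : ℝ) ^ p)⁻¹ : ℝ)) : ℂ) by push_cast; ring]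
    rw [Complex.zero_le_real]
    positivity
  have hmixtr : (c • (1 : Matrix (Fin (2 ^ p)) (Fin (2 ^ p)) ℂ)).trace = 1 := by
    rw [Matrix.trace_smul, Matrix.trace_one, hc, smul_eq_mul, Fintype.card_fin]
    push_cast
    rw [inv_mul_cancel₀]
    exact pow_ne_zero _ two_ne_zero
  -- Part 1
  have part1 : ∀ (ρ : Matrix (Fin (2 ^ p)) (Fin (2 ^ p)) ℂ), ρ.PosSemidef → ρ.trace = 1 →
      ∀ a : ℝ, a ≤ (Q * ρ).trace.re →
        a * ((2 : ℝ) ^ p)⁻¹ ≤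
          (Q * (c • (1 : Matrix (Fin (2 ^ p)) (Fin (2 ^ p)) ℂ))).trace.re := by
    intro ρ hρ htr a ha
    rw [hmix]
    have hsub : ((1 : Matrix (Fin (2 ^ p)) (Fin (2 ^ p)) ℂ) - ρ).PosSemidef :=
      aux_one_sub_posSemidef hρ htr
    have hkey : (Q * ρ).trace.re ≤ Q.trace.re := by
      have h0 : 0 ≤ (Q * ((1 : Matrix (Fin (2 ^ p)) (Fin (2 ^ p)) ℂ) - ρ)).trace.re :=
        aux_trace_mul_re_nonneg hQ hsub
      rw [Matrix.mul_sub, Matrix.mul_one] at h0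
      rw [Matrix.trace_sub] at h0
      have : (Q.trace - (Q * ρ).trace).re = Q.trace.re - (Q * ρ).trace.re := by
        simp [Complex.sub_re]
      rw [this] at h0
      linarith
    have := le_trans ha hkey
    calc a * ((2 : ℝ) ^ p)⁻¹ ≤ Q.trace.re * ((2 : ℝ) ^ p)⁻¹ := by
          apply mul_le_mul_of_nonneg_right this
          positivity
      _ = ((2 : ℝ) ^ p)⁻¹ * Q.trace.re := by ring
  refine ⟨part1, ?_, ?_⟩
  · rintro ⟨ρ, hρ, htr, ha⟩
    have h := part1 ρ hρ htr (1 - ((2 : ℝ) ^ (p + 2))⁻¹) ha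
    refine le_trans ?_ h
    have h1 : (1 : ℝ) ≤ (2 : ℝ) ^ p := one_le_pow₀ (by norm_num : (1:ℝ) ≤ 2)
    rw [pow_succ, pow_add]
    have : ((2 : ℝ) ^ p * 2 ^ 2)⁻¹ = ((2 : ℝ) ^ p)⁻¹ * (1/4) := by
      rw [mul_inv]; norm_num
    rw [this]
    rw [show ((2 : ℝ) ^ p * 2)⁻¹ = ((2 : ℝ) ^ p)⁻¹ * (1/2) by rw [mul_inv]; norm_num]
    have hinv : (0 : ℝ) < ((2 : ℝ) ^ p)⁻¹ := by positivity
    have hinvle : ((2 : ℝ) ^ p)⁻¹ ≤ 1 := by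
      rw [inv_le_one_iff₀]; right; exact h1
    nlinarith
  · intro h
    have := h (c • (1 : Matrix (Fin (2 ^ p)) (Fin (2 ^ p)) ℂ)) hmixPSD hmixtr
    exact this
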